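/- Let (L₁, L₂, P, (⊛ᵢ, ↙ⁱ, ↖ᵢ)_{i∈I}) be a multi-adjoint frame and let (X, Y, φ, τ) be a context of this frame. Define φ↑ : (X → L₁) → (Y → L₂) by (φ↑ μ)(y) = ⨅_{x∈X} φ(x,y) ↖_{τ(y)} μ(x), and φ↓ : (Y → L₂) → (X → L₁) by (φ↓ λ)(x) = ⨅_{y∈Y} φ(x,y) ↙^{τ(y)} λ(y). Then (φ↑, φ↓) is an antitone Galois connection: for all μ : X → L₁ and λ : Y → L₂, λ ≤ φ↑ μ (pointwise in L₂) if and only if μ ≤ φ↓ λ (pointwise in L₁). -/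
import Mathlib


/-- For a context of a multi-adjoint frame, the concept-forming
operators `φ↑` and `φ↓` form an antitone Galois connection. -/
theorem stmt_4 {L₁ L₂ P : Type*} [CompleteLattice L₁] [CompleteLattice L₂]
    [CompleteLattice P] {I : Type*}
    (w : I → L₁ → L₂ → P) (ld : I → P → L₂ → L₁) (lu : I → P → L₁ → L₂)
    (adj : ∀ (i : I) (x : L₁) (y : L₂) (z : P),
      (w i x y ≤ z ↔ x ≤ ld i z y) ∧ (w i x y ≤ z ↔ y ≤ lu i z x))
    {X Y : Type*} (φ : X → Y → P) (τ : Y → I)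
    (up : (X → L₁) → Y → L₂) (dn : (Y → L₂) → X → L₁)
    (hup : ∀ (μ : X → L₁) (y : Y), up μ y = ⨅ x, lu (τ y) (φ x y) (μ x))
    (hdn : ∀ (lam : Y → L₂) (x : X), dn lam x = ⨅ y, ld (τ y) (φ x y) (lam y)) :
    ∀ (μ : X → L₁) (lam : Y → L₂), lam ≤ up μ ↔ μ ≤ dn lam := by
  intro μ lam
  constructor
  · intro h x
    rw [hdn]
    refine le_iInf fun y => ?_
    have := h y
    rw [hup] at this
    have h2 : lam y ≤ lu (τ y) (φ x y) (μ x) := this.trans (iInf_le _ x)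
    exact ((adj (τ y) (μ x) (lam y) (φ x y)).1).mp
      (((adj (τ y) (μ x) (lam y) (φ x y)).2).mpr h2)
  · intro h y
    rw [hup]
    refine le_iInf fun x => ?_
    have := h x
    rw [hdn] at this
    have h2 : μ x ≤ ld (τ y) (φ x y) (lam y) := this.trans (iInf_le _ y)
    exact ((adj (τ y) (μ x) (lam y) (φ x y)).2).mp
      (((adj (τ y) (μ x) (lam y) (φ x y)).1).mpr h2)
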